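/- In the heterogeneous game, the profile d_i* = 0 for all i is a Nash equilibrium if and only if ε_i ≥ (ξ_i ℓ_i + θ_i Σ_{j≠i} ℓ_j²)^{-1} for every user i. -/

import Mathlib

open Finset

/-- Payoff of user `i` in the federated unlearning data revocation game. -/
noncomputable def payoff {I : ℕ} (ξ ℓ θ ε dmax : Fin I → ℝ) (i : Fin I)
    (d : Fin I → ℝ) : ℝ :=
  Real.log (∑ j, d j + ε i) - ξ i * ℓ i * d i
    - θ i * d i * ∑ j ∈ Finset.univ.erase i, (1 - d j / dmax j) * (ℓ j) ^ 2

/-- `d` is a Nash equilibrium: no user can improve by a unilateral deviation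
within its strategy set `[0, d_i^max]`. -/
def IsNash {I : ℕ} (ξ ℓ θ ε dmax : Fin I → ℝ) (d : Fin I → ℝ) : Prop :=
  ∀ i : Fin I, ∀ x ∈ Set.Icc (0 : ℝ) (dmax i),
    payoff ξ ℓ θ ε dmax i (Function.update d i x) ≤ payoff ξ ℓ θ ε dmax i d

/-- Proposition 2 (full revocation case): all users fully revoking
(`d_i* = 0` for all `i`) is a Nash equilibrium iff
`ε_i ≥ (ξ_i ℓ_i + θ_i Σ_{j≠i} ℓ_j²)⁻¹` for every user `i`. -/
theorem stmt4 (I : ℕ) (hI : 1 ≤ I) (ξ ℓ θ ε dmax : Fin I → ℝ)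
    (hξ : ∀ i, 0 < ξ i) (hℓ : ∀ i, 0 < ℓ i) (hθ : ∀ i, 0 < θ i)
    (hε : ∀ i, 0 < ε i) (hdmax : ∀ i, 0 < dmax i) :
    IsNash ξ ℓ θ ε dmax (fun _ => 0) ↔
      ∀ i : Fin I,
        (ξ i * ℓ i + θ i * ∑ j ∈ Finset.univ.erase i, (ℓ j) ^ 2)⁻¹ ≤ ε i := by
  have key : ∀ (i : Fin I) (x : ℝ),
      payoff ξ ℓ θ ε dmax i (Function.update (fun _ => 0) i x)
        = Real.log (x + ε i)
          - (ξ i * ℓ i + θ i * ∑ j ∈ Finset.univ.erase i, (ℓ j) ^ 2) * x := by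
    intro i x
    have hsum : ∑ j, Function.update (fun _ : Fin I => (0 : ℝ)) i x j = x := by
      rw [Finset.sum_update_of_mem (Finset.mem_univ i)]
      simp
    have herase : ∑ j ∈ Finset.univ.erase i,
        (1 - Function.update (fun _ : Fin I => (0 : ℝ)) i x j / dmax j) * (ℓ j) ^ 2
        = ∑ j ∈ Finset.univ.erase i, (ℓ j) ^ 2 := by
      refine Finset.sum_congr rfl fun j hj => ?_
      rw [Function.update_of_ne (Finset.ne_of_mem_erase hj)]
      simp
    simp only [payoff, hsum, herase, Function.update_self]
    ring
  have hbase : ∀ i : Fin I,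
      payoff ξ ℓ θ ε dmax i (fun _ => 0) = Real.log (ε i) := by
    intro i; simp [payoff]
  have hS : ∀ i : Fin I, (0 : ℝ) ≤ ∑ j ∈ Finset.univ.erase i, (ℓ j) ^ 2 :=
    fun i => Finset.sum_nonneg fun j _ => sq_nonneg _
  have hA : ∀ i : Fin I,
      0 < ξ i * ℓ i + θ i * ∑ j ∈ Finset.univ.erase i, (ℓ j) ^ 2 :=
    fun i => add_pos_of_pos_of_nonneg (mul_pos (hξ i) (hℓ i))
      (mul_nonneg (hθ i).le (hS i))
  constructor
  · intro hN i
    set A := ξ i * ℓ i + θ i * ∑ j ∈ Finset.univ.erase i, (ℓ j) ^ 2 with hAdef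
    by_contra hlt
    push_neg at hlt
    have hAi : 0 < A := hA i
    set x := min (dmax i) ((A⁻¹ - ε i) / 2) with hxdef
    have hx0 : 0 < x := lt_min (hdmax i) (by linarith)
    have hxd : x ≤ dmax i := min_le_left _ _
    have hxlt : x + ε i < A⁻¹ := by
      have : x ≤ (A⁻¹ - ε i) / 2 := min_le_right _ _
      linarith
    have hle := hN i x ⟨hx0.le, hxd⟩
    rw [key, hbase, ← hAdef] at hle
    have hxε : 0 < x + ε i := by linarith [hε i]
    have hratio : 0 < (x + ε i) / ε i := div_pos hxε (hε i)
    have hlog : 1 - ((x + ε i) / ε i)⁻¹ ≤ Real.log ((x + ε i) / ε i) :=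
      Real.one_sub_inv_le_log_of_pos hratio
    rw [Real.log_div hxε.ne' (hε i).ne'] at hlog
    have hinv : 1 - ((x + ε i) / ε i)⁻¹ = x * (x + ε i)⁻¹ := by
      rw [inv_div]
      field_simp
      ring
    rw [hinv] at hlog
    have h2 : x * (x + ε i)⁻¹ ≤ A * x := by
      clear hratio hinv
      clear_value A x
      linarith
    have h3 : A * (x + ε i) < 1 := by
      have := (mul_lt_mul_iff_right₀ hAi).2 hxlt
      rwa [mul_inv_cancel₀ hAi.ne'] at this
    have h5 : A * x < x * (x + ε i)⁻¹ := by
      have h6 : A * x * (x + ε i) < x := by nlinarith [mul_lt_mul_of_pos_left h3 hx0]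
      calc A * x = A * x * (x + ε i) * (x + ε i)⁻¹ := by
            field_simp
        _ < x * (x + ε i)⁻¹ :=
            mul_lt_mul_of_pos_right h6 (inv_pos.2 hxε)
    linarith
  · intro h i x hx
    obtain ⟨hx0, hxd⟩ := hx
    rw [key, hbase]
    set A := ξ i * ℓ i + θ i * ∑ j ∈ Finset.univ.erase i, (ℓ j) ^ 2 with hAdef
    have hAi : 0 < A := hA i
    have h1A : 1 ≤ ε i * A := by
      have h0 := mul_le_mul_of_nonneg_right (h i) hAi.le
      rwa [inv_mul_cancel₀ hAi.ne'] at h0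
    have hxε : 0 < x + ε i := by linarith [hε i]
    have hratio : 0 < (x + ε i) / ε i := div_pos hxε (hε i)
    have hlog : Real.log ((x + ε i) / ε i) ≤ (x + ε i) / ε i - 1 :=
      Real.log_le_sub_one_of_pos hratio
    rw [Real.log_div hxε.ne' (hε i).ne'] at hlog
    have h1 : (x + ε i) / ε i - 1 = x * (ε i)⁻¹ := by
      rw [div_sub_one (hε i).ne', add_sub_cancel_right, div_eq_mul_inv]
    rw [h1] at hlog
    have h2 : x * (ε i)⁻¹ ≤ A * x := by
      have hεi := hε i
      have hinv : (ε i)⁻¹ ≤ A := by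
        have h0 := mul_le_mul_of_nonneg_left h1A (inv_nonneg.2 hεi.le)
        rwa [mul_one, ← mul_assoc, inv_mul_cancel₀ hεi.ne', one_mul] at h0
      calc x * (ε i)⁻¹ ≤ x * A := mul_le_mul_of_nonneg_left hinv hx0
        _ = A * x := mul_comm _ _
    clear hratio h1
    clear_value A
    linarith
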